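/- Corollary 1: For every d×d complex density matrix ρ (d ≥ 2), the three quantities S_D, S_X, S_I satisfy (a) S_I² ≤ 1 + S_D² + S_X², and (b) if moreover S_D² + S_X² ≤ 1/(d−1) and d is odd, then √d · S_I ≤ √(d−1) + √(S_D² + S_X²). -/

import Mathlib

open Matrix
open scoped ComplexOrder

noncomputable section

/-- A density matrix: positive semidefinite with unit trace. -/
def IsDensityMatrix {d : ℕ} (ρ : Matrix (Fin d) (Fin d) ℂ) : Prop :=
  ρ.PosSemidef ∧ ρ.trace = 1

/-- The diagonal part `D` of the decomposition `d·ρ = 𝟙 + D + X + I`. -/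
def Dmat (d : ℕ) (ρ : Matrix (Fin d) (Fin d) ℂ) : Matrix (Fin d) (Fin d) ℂ :=
  Matrix.diagonal fun k => (d : ℂ) * ρ k k - 1

/-- The real off-diagonal part `X`: `X_kl = d·Re(ρ_kl)` for `k ≠ l`, zero diagonal. -/
def Xmat (d : ℕ) (ρ : Matrix (Fin d) (Fin d) ℂ) : Matrix (Fin d) (Fin d) ℂ :=
  Matrix.of fun k l => if k = l then 0 else (((d : ℝ) * (ρ k l).re : ℝ) : ℂ)

/-- The imaginary off-diagonal part `I`: `I_kl = i·d·Im(ρ_kl)` for `k ≠ l`, zero diagonal. -/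
def Imat (d : ℕ) (ρ : Matrix (Fin d) (Fin d) ℂ) : Matrix (Fin d) (Fin d) ℂ :=
  Matrix.of fun k l => if k = l then 0 else Complex.I * (((d : ℝ) * (ρ k l).im : ℝ) : ℂ)

/-- `S_D = √(Tr(D²)/d)`. -/
def SD (d : ℕ) (ρ : Matrix (Fin d) (Fin d) ℂ) : ℝ :=
  Real.sqrt ((Dmat d ρ * Dmat d ρ).trace.re / d)

/-- `S_X = √(Tr(X²)/d)`. -/
def SX (d : ℕ) (ρ : Matrix (Fin d) (Fin d) ℂ) : ℝ :=
  Real.sqrt ((Xmat d ρ * Xmat d ρ).trace.re / d)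

/-- `S_I = √(Tr(I²)/d)`. -/
def SI (d : ℕ) (ρ : Matrix (Fin d) (Fin d) ℂ) : ℝ :=
  Real.sqrt ((Imat d ρ * Imat d ρ).trace.re / d)


lemma diag_re_nonneg {d : ℕ} {M : Matrix (Fin d) (Fin d) ℂ} (hM : M.PosSemidef) (k : Fin d) :
    0 ≤ (M k k).re := by
  have h := hM.diag_nonneg (i := k)
  exact (Complex.le_def.mp h).1

lemma conj_mul_trace {d : ℕ} (U A B : Matrix (Fin d) (Fin d) ℂ) (hU : U * star U = 1) :
    ((star U * A * U) * (star U * B * U)).trace = (A * B).trace := by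
  have h2 : U * (star U * B * U) = B * U := by
    rw [← Matrix.mul_assoc, ← Matrix.mul_assoc, hU, Matrix.one_mul]
  have h : (star U * A * U) * (star U * B * U) = star U * (A * B) * U := by
    rw [Matrix.mul_assoc (star U * A), h2, ← Matrix.mul_assoc, Matrix.mul_assoc (star U) A B]
  rw [h, Matrix.trace_mul_cycle, ← Matrix.mul_assoc, hU, Matrix.one_mul]

open Finset in
lemma core_arith (d : ℕ) (hd : 2 ≤ d) (lam r : Fin d → ℝ) (P a : ℝ)
    (hlr : ∀ k, |lam k| ≤ r k)
    (hsum : ∑ k, r k = 1)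
    (hP : ∑ k, r k ^ 2 ≤ P)
    (haP : (d : ℝ) * P = 1 + a)
    (ha : 0 ≤ a) :
    (∑ k, lam k ^ 2 ≤ P) ∧
    (∀ k₀, lam k₀ = 0 → ((d:ℝ) - 1) * a ≤ 1 →
      (d:ℝ)^2 * ∑ k, lam k ^ 2 ≤ ((d:ℝ) - 1) + a + 2 * Real.sqrt (((d:ℝ)-1) * a)) := by
  have hlam2 : ∀ k, lam k ^ 2 ≤ r k ^ 2 := fun k => by
    calc lam k ^ 2 = |lam k| ^ 2 := (sq_abs _).symm
    _ ≤ r k ^ 2 := pow_le_pow_left₀ (abs_nonneg _) (hlr k) 2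
  have hmain : ∑ k, lam k ^ 2 ≤ ∑ k, r k ^ 2 := Finset.sum_le_sum fun k _ => hlam2 k
  refine ⟨hmain.trans hP, ?_⟩
  intro k₀ hk₀ hy1
  have hd1 : (1:ℝ) ≤ (d:ℝ) - 1 := by
    have : (2:ℝ) ≤ d := by exact_mod_cast hd
    linarith
  have hy0 : 0 ≤ ((d:ℝ)-1) * a := mul_nonneg (by linarith) ha
  have hsplit : ∀ f : Fin d → ℝ, ∑ k, f k = f k₀ + ∑ k ∈ univ.erase k₀, f k := by
    intro f; rw [Finset.add_sum_erase _ f (Finset.mem_univ k₀)]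
  have hcard : ((univ.erase k₀).card : ℝ) = (d:ℝ) - 1 := by
    rw [Finset.card_erase_of_mem (Finset.mem_univ k₀)]
    rw [Finset.card_univ, Fintype.card_fin]
    rw [Nat.cast_sub (by omega), Nat.cast_one]
  set r0 := r k₀ with hr0def
  have hr0 : 0 ≤ r0 := le_trans (abs_nonneg _) (hlr k₀)
  have hsum1 : ∑ k ∈ univ.erase k₀, r k = 1 - r0 := by
    have := hsplit r; rw [hsum] at this; linarith
  have hsum2 : ∑ k ∈ univ.erase k₀, r k ^ 2 = (∑ k, r k ^ 2) - r0 ^ 2 := by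
    have := hsplit (fun k => r k ^ 2); linarith
  have hlamsum : ∑ k, lam k ^ 2 ≤ (∑ k, r k ^ 2) - r0 ^ 2 := by
    rw [hsplit (fun k => lam k ^ 2), hk₀, ← hsum2]
    have := Finset.sum_le_sum (fun k (_ : k ∈ univ.erase k₀) => hlam2 k)
    simpa using this
  have hCS : (1 - r0)^2 ≤ ((d:ℝ) - 1) * ((∑ k, r k ^ 2) - r0 ^ 2) := by
    have h1 := sq_sum_le_card_mul_sum_sq (s := univ.erase k₀) (f := r)
    rw [hsum1, hcard, hsum2] at h1
    exact h1
  have e1 : (1 - r0)^2 ≤ ((d:ℝ) - 1) * (P - r0^2) := by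
    nlinarith [mul_nonneg (sub_nonneg.mpr hP) (show (0:ℝ) ≤ (d:ℝ)-1 by linarith)]
  have e2 := mul_le_mul_of_nonneg_left e1 (show (0:ℝ) ≤ (d:ℝ) by positivity)
  have e4 : (d:ℝ) * ((d:ℝ) * P) = (d:ℝ) * (1 + a) := by rw [haP]
  have hq : ((d:ℝ)*r0 - 1)^2 ≤ ((d:ℝ)-1) * a := by nlinarith [e2, e4, haP]
  have hsq : |(d:ℝ)*r0 - 1| ≤ Real.sqrt (((d:ℝ)-1) * a) := by
    rw [← Real.sqrt_sq_eq_abs]; exact Real.sqrt_le_sqrt hq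
  have hsy : Real.sqrt (((d:ℝ)-1) * a) ≤ 1 := by
    exact (Real.sqrt_le_sqrt hy1).trans_eq Real.sqrt_one
  have h6 : 1 - Real.sqrt (((d:ℝ)-1) * a) ≤ (d:ℝ) * r0 := by
    have := abs_le.mp hsq; linarith [this.1]
  have h7 : (1 - Real.sqrt (((d:ℝ)-1) * a))^2 ≤ ((d:ℝ) * r0)^2 :=
    pow_le_pow_left₀ (by linarith) h6 2
  have hfin : (d:ℝ)^2 * ∑ k, lam k^2 ≤ (d:ℝ)^2 * ((∑ k, r k^2) - r0^2) :=
    mul_le_mul_of_nonneg_left hlamsum (by positivity)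
  have hyy := Real.sq_sqrt hy0
  have hPd2 : (d:ℝ)^2 * ((∑ k, r k ^2)) ≤ (d:ℝ)^2 * P :=
    mul_le_mul_of_nonneg_left hP (by positivity)
  nlinarith [hfin, h7, hyy, e4, haP, hPd2, Real.sqrt_nonneg (((d:ℝ)-1) * a)]

/-- **Corollary 1.** For every `d×d` density matrix (`d ≥ 2`):
(a) `S_I² ≤ 1 + S_D² + S_X²`, and (b) if `d` is odd and `S_D² + S_X² ≤ 1/(d−1)`,
then `√d · S_I ≤ √(d−1) + √(S_D² + S_X²)`. -/
theorem full_bounds (d : ℕ) (hd : 2 ≤ d) (ρ : Matrix (Fin d) (Fin d) ℂ)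
    (hρ : IsDensityMatrix ρ) :
    SI d ρ ^ 2 ≤ 1 + SD d ρ ^ 2 + SX d ρ ^ 2 ∧
    (Odd d → SD d ρ ^ 2 + SX d ρ ^ 2 ≤ 1 / ((d : ℝ) - 1) →
      Real.sqrt d * SI d ρ ≤ Real.sqrt ((d : ℝ) - 1)
        + Real.sqrt (SD d ρ ^ 2 + SX d ρ ^ 2)) := by
  obtain ⟨hpsd, htr⟩ := hρ
  have hherm : ρ.IsHermitian := hpsd.1
  have hconj : ∀ k l, ρ l k = (starRingEnd ℂ) (ρ k l) := by
    intro k l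
    have := hherm.apply k l
    rw [← this]
    simp
  have himdiag : ∀ k, (ρ k k).im = 0 := by
    intro k
    have := hconj k k
    exact Complex.conj_eq_iff_im.mp this.symm
  have hxsymm : ∀ k l, (ρ l k).re = (ρ k l).re := by
    intro k l; rw [hconj k l]; simp
  have himsymm : ∀ k l, (ρ l k).im = -(ρ k l).im := by
    intro k l; rw [hconj k l]; simp
  have hd0 : (0:ℝ) < d := by positivity
  have hd0' : (d:ℝ) ≠ 0 := ne_of_gt hd0
  -- the matrices K and R
  set K : Matrix (Fin d) (Fin d) ℂ := (2:ℂ)⁻¹ • (ρ - ρᵀ) with hKdef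
  set R : Matrix (Fin d) (Fin d) ℂ := (2:ℂ)⁻¹ • (ρ + ρᵀ) with hRdef
  have hKentry : ∀ k l, K k l = (((ρ k l).im : ℝ) : ℂ) * Complex.I := by
    intro k l
    rw [hKdef]
    simp only [Matrix.smul_apply, Matrix.sub_apply, Matrix.transpose_apply, smul_eq_mul]
    rw [hconj k l, Complex.sub_conj]
    push_cast
    ring
  have hRentry : ∀ k l, R k l = (((ρ k l).re : ℝ) : ℂ) := by
    intro k l
    rw [hRdef]
    simp only [Matrix.smul_apply, Matrix.add_apply, Matrix.transpose_apply, smul_eq_mul]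
    rw [hconj k l, Complex.add_conj]
    push_cast
    ring
  have hKherm : K.IsHermitian := by
    ext k l
    rw [Matrix.conjTranspose_apply, hKentry l k, hKentry k l, himsymm k l]
    simp [Complex.conj_I]
  have hRherm : R.IsHermitian := by
    ext k l
    rw [Matrix.conjTranspose_apply, hRentry l k, hRentry k l, hxsymm k l]
    simp
  -- eigen data
  set U : Matrix (Fin d) (Fin d) ℂ := (hKherm.eigenvectorUnitary : Matrix (Fin d) (Fin d) ℂ) with hUdef
  have hU1 : star U * U = 1 := Unitary.coe_star_mul_self hKherm.eigenvectorUnitary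
  have hU2 : U * star U = 1 := Unitary.coe_mul_star_self hKherm.eigenvectorUnitary
  set lam : Fin d → ℝ := hKherm.eigenvalues with hlamdef
  have hdiagK : star U * K * U = Matrix.diagonal (fun i => ((lam i : ℝ) : ℂ)) :=
    by
      have h := hKherm.conjStarAlgAut_star_eigenvectorUnitary
      rw [Unitary.conjStarAlgAut_star_apply] at h
      exact h
  set M : Matrix (Fin d) (Fin d) ℂ := star U * ρ * U with hMdef
  set N : Matrix (Fin d) (Fin d) ℂ := star U * ρᵀ * U with hNdef
  have hMpsd : M.PosSemidef := by
    have := hpsd.conjTranspose_mul_mul_same (B := U)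
    rwa [← Matrix.star_eq_conjTranspose] at this
  have hNpsd : N.PosSemidef := by
    have := hpsd.transpose.conjTranspose_mul_mul_same (B := U)
    rwa [← Matrix.star_eq_conjTranspose] at this
  set r : Fin d → ℝ := fun k => ((M k k).re + (N k k).re)/2 with hrdef
  have hMN : M - N = (2:ℂ) • Matrix.diagonal (fun i => ((lam i : ℝ) : ℂ)) := by
    rw [← hdiagK, hKdef]
    rw [Matrix.mul_smul, Matrix.smul_mul, smul_smul]
    norm_num
    rw [Matrix.mul_sub, Matrix.sub_mul]
  have hMNdiag : ∀ k, (M k k).re - (N k k).re = 2 * lam k := by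
    intro k
    have := congrFun (congrFun hMN k) k
    simp only [Matrix.sub_apply, Matrix.smul_apply, Matrix.diagonal_apply_eq, smul_eq_mul] at this
    have := congrArg Complex.re this
    simpa using this
  have hlr : ∀ k, |lam k| ≤ r k := by
    intro k
    have h1 := diag_re_nonneg hMpsd k
    have h2 := diag_re_nonneg hNpsd k
    have h3 := hMNdiag k
    rw [abs_le, hrdef]
    constructor <;> simp only [] <;> linarith
  -- sum of r = 1
  have htrM : M.trace = 1 := by
    rw [hMdef, Matrix.trace_mul_cycle, hU2, Matrix.one_mul, htr]
  have htrN : N.trace = 1 := by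
    rw [hNdef, Matrix.trace_mul_cycle, hU2, Matrix.one_mul, Matrix.trace_transpose, htr]
  have hdiagsum : ∀ (Q : Matrix (Fin d) (Fin d) ℂ), (∑ k, (Q k k).re) = Q.trace.re := by
    intro Q
    rw [Matrix.trace, Complex.re_sum]
    rfl
  have hsumr : ∑ k, r k = 1 := by
    have h : ∑ k, r k = ((∑ k, (M k k).re) + ∑ k, (N k k).re)/2 := by
      rw [hrdef, ← Finset.sum_add_distrib, ← Finset.sum_div]
    rw [h, hdiagsum M, hdiagsum N, htrM, htrN]
    norm_num
  -- W and the bound on sum r^2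
  set W : Matrix (Fin d) (Fin d) ℂ := star U * R * U with hWdef
  have hWherm : W.IsHermitian := by
    rw [hWdef, Matrix.star_eq_conjTranspose]
    exact Matrix.isHermitian_conjTranspose_mul_mul U hRherm
  have hW2 : W = (2:ℂ)⁻¹ • (M + N) := by
    rw [hWdef, hRdef, Matrix.mul_smul, Matrix.smul_mul, Matrix.mul_add, Matrix.add_mul]
  have hrW : ∀ k, r k = (W k k).re := by
    intro k
    have h := congrFun (congrFun hW2 k) k
    simp only [Matrix.smul_apply, Matrix.add_apply, smul_eq_mul] at h
    rw [hrdef, h]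
    rw [show ((2:ℂ)⁻¹) = (((2:ℝ)⁻¹ : ℝ) : ℂ) by norm_num, Complex.re_ofReal_mul, Complex.add_re]
    ring
  have htrWW : (W * W).trace = (R * R).trace := conj_mul_trace U R R hU2
  have hWW_re : (W * W).trace.re = ∑ k, ∑ l, Complex.normSq (W k l) := by
    rw [← hdiagsum (W * W)]
    refine Finset.sum_congr rfl fun k _ => ?_
    rw [Matrix.mul_apply, Complex.re_sum]
    refine Finset.sum_congr rfl fun l _ => ?_
    have hc : W l k = (starRingEnd ℂ) (W k l) := by
      have := hWherm.apply k l
      rw [← this]; simp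
    rw [hc, Complex.mul_conj]
    simp
  have hrP : ∑ k, r k ^ 2 ≤ (R * R).trace.re := by
    have h2 : ∑ k, r k ^ 2 ≤ ∑ k, Complex.normSq (W k k) := by
      refine Finset.sum_le_sum fun k _ => ?_
      rw [hrW k, Complex.normSq_apply]
      nlinarith [mul_self_nonneg (W k k).im]
    have h3 : ∑ k, Complex.normSq (W k k) ≤ ∑ k, ∑ l, Complex.normSq (W k l) :=
      Finset.sum_le_sum fun k _ => Finset.single_le_sum
        (f := fun l => Complex.normSq (W k l)) (fun l _ => Complex.normSq_nonneg _)
        (Finset.mem_univ k)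
    rw [← htrWW, hWW_re]
    linarith
  -- entrywise trace computations
  have hTrR : (R * R).trace.re = ∑ k, ∑ l, (ρ k l).re ^ 2 := by
    rw [← hdiagsum (R * R)]
    refine Finset.sum_congr rfl fun k _ => ?_
    rw [Matrix.mul_apply, Complex.re_sum]
    refine Finset.sum_congr rfl fun l _ => ?_
    rw [hRentry k l, hRentry l k, hxsymm k l, ← Complex.ofReal_mul]
    rw [Complex.ofReal_re]
    ring
  have hTrD : (Dmat d ρ * Dmat d ρ).trace.re = ∑ k, ((d:ℝ) * (ρ k k).re - 1)^2 := by
    unfold Dmat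
    rw [Matrix.diagonal_mul_diagonal, Matrix.trace_diagonal, Complex.re_sum]
    refine Finset.sum_congr rfl fun k _ => ?_
    have hzr : ((d:ℂ) * ρ k k - 1) = ((((d:ℝ) * (ρ k k).re - 1 : ℝ)) : ℂ) := by
      apply Complex.ext <;> simp [himdiag k]
    rw [hzr, ← Complex.ofReal_mul, Complex.ofReal_re]
    ring
  have hTrX : (Xmat d ρ * Xmat d ρ).trace.re
      = ∑ k, ∑ l, (if k = l then 0 else (d:ℝ)^2 * (ρ k l).re^2) := by
    rw [← hdiagsum _]
    refine Finset.sum_congr rfl fun k _ => ?_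
    rw [Matrix.mul_apply, Complex.re_sum]
    refine Finset.sum_congr rfl fun l _ => ?_
    by_cases hkl : k = l
    · simp [Xmat, hkl]
    · have h1 : Xmat d ρ k l = (((d:ℝ) * (ρ k l).re : ℝ) : ℂ) := by simp [Xmat, hkl]
      have h2 : Xmat d ρ l k = (((d:ℝ) * (ρ k l).re : ℝ) : ℂ) := by
        simp [Xmat, Ne.symm hkl, hxsymm k l]
      rw [h1, h2, if_neg hkl, ← Complex.ofReal_mul, Complex.ofReal_re]
      ring
  have hImat : Imat d ρ = (d:ℂ) • K := by
    ext k l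
    by_cases hkl : k = l
    · simp [Imat, hkl, hKentry, himdiag l]
    · simp only [Imat, Matrix.of_apply, if_neg hkl, Matrix.smul_apply, hKentry k l, smul_eq_mul]
      push_cast
      ring
  have htrK2 : (K * K).trace = ∑ k, ((lam k : ℝ) : ℂ)^2 := by
    rw [← conj_mul_trace U K K hU2, hdiagK, Matrix.diagonal_mul_diagonal, Matrix.trace_diagonal]
    refine Finset.sum_congr rfl fun k _ => ?_
    ring
  have hTrI : (Imat d ρ * Imat d ρ).trace.re = (d:ℝ)^2 * ∑ k, lam k ^ 2 := by
    rw [hImat, Matrix.smul_mul, Matrix.mul_smul, smul_smul, Matrix.trace_smul, htrK2]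
    rw [smul_eq_mul]
    have hc : (∑ k, ((lam k : ℝ) : ℂ)^2) = (((∑ k, lam k ^ 2 : ℝ)) : ℂ) := by
      push_cast; ring
    rw [hc, show ((d:ℂ) * (d:ℂ)) = (((d:ℝ)^2 : ℝ) : ℂ) by push_cast; ring,
      ← Complex.ofReal_mul, Complex.ofReal_re]
  -- algebraic identity  d * Tr(R^2) = 1 + SD^2 + SX^2
  have hC : ∑ k, (ρ k k).re = 1 := by
    rw [hdiagsum ρ, htr, Complex.one_re]
  have hPAB : (R * R).trace.re
      = (∑ k, (ρ k k).re^2) + ∑ k, ∑ l, (if k = l then (0:ℝ) else (ρ k l).re^2) := by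
    rw [hTrR, ← Finset.sum_add_distrib]
    refine Finset.sum_congr rfl fun k _ => ?_
    have hterm : ∀ l, (ρ k l).re^2
        = (if k = l then (ρ k l).re^2 else 0) + (if k = l then (0:ℝ) else (ρ k l).re^2) := by
      intro l; by_cases h : k = l <;> simp [h]
    rw [Finset.sum_congr rfl fun l _ => hterm l, Finset.sum_add_distrib, Finset.sum_ite_eq]
    simp
  have hDsum : (Dmat d ρ * Dmat d ρ).trace.re = (d:ℝ)^2 * (∑ k, (ρ k k).re^2) - (d:ℝ) := by
    rw [hTrD]
    have e : ∀ k, ((d:ℝ)*(ρ k k).re - 1)^2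
        = ((d:ℝ)^2*(ρ k k).re^2 - (2*(d:ℝ))*(ρ k k).re) + 1 := fun k => by ring
    rw [Finset.sum_congr rfl fun k _ => e k]
    rw [Finset.sum_add_distrib, Finset.sum_sub_distrib, ← Finset.mul_sum, ← Finset.mul_sum, hC]
    simp [Finset.card_univ]
    ring
  have hXsum : (Xmat d ρ * Xmat d ρ).trace.re
      = (d:ℝ)^2 * ∑ k, ∑ l, (if k = l then (0:ℝ) else (ρ k l).re^2) := by
    rw [hTrX, Finset.mul_sum]
    refine Finset.sum_congr rfl fun k _ => ?_
    rw [Finset.mul_sum]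
    refine Finset.sum_congr rfl fun l _ => ?_
    by_cases h : k = l <;> simp [h]
  have hD0 : 0 ≤ (Dmat d ρ * Dmat d ρ).trace.re := by rw [hTrD]; positivity
  have hX0 : 0 ≤ (Xmat d ρ * Xmat d ρ).trace.re := by
    rw [hTrX]
    refine Finset.sum_nonneg fun k _ => Finset.sum_nonneg fun l _ => ?_
    by_cases h : k = l <;> simp [h]
    positivity
  have hSD2 : SD d ρ ^ 2 = (Dmat d ρ * Dmat d ρ).trace.re / d := by
    unfold SD; exact Real.sq_sqrt (div_nonneg hD0 hd0.le)
  have hSX2 : SX d ρ ^ 2 = (Xmat d ρ * Xmat d ρ).trace.re / d := by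
    unfold SX; exact Real.sq_sqrt (div_nonneg hX0 hd0.le)
  have hI0 : 0 ≤ (Imat d ρ * Imat d ρ).trace.re := by
    rw [hTrI]; positivity
  have hSI2 : SI d ρ ^ 2 = (Imat d ρ * Imat d ρ).trace.re / d := by
    unfold SI; exact Real.sq_sqrt (div_nonneg hI0 hd0.le)
  have haP : (d:ℝ) * ((R * R).trace.re) = 1 + (SD d ρ ^2 + SX d ρ ^2) := by
    rw [hPAB, hSD2, hSX2, hDsum, hXsum]
    field_simp
    ring
  have ha0 : 0 ≤ SD d ρ ^2 + SX d ρ ^2 := by positivity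
  obtain ⟨hpa, hpb⟩ := core_arith d hd lam r ((R * R).trace.re) (SD d ρ ^2 + SX d ρ ^2)
    hlr hsumr hrP haP ha0
  have hSIlam : SI d ρ ^2 = (d:ℝ) * ∑ k, lam k ^2 := by
    rw [hSI2, hTrI]
    field_simp
  constructor
  · rw [hSIlam]
    calc (d:ℝ) * ∑ k, lam k^2 ≤ (d:ℝ) * ((R * R).trace.re) :=
          mul_le_mul_of_nonneg_left hpa hd0.le
      _ = 1 + (SD d ρ ^2 + SX d ρ^2) := haP
      _ = 1 + SD d ρ^2 + SX d ρ^2 := by ring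
  · intro hodd hsmall
    have hd1 : (0:ℝ) < (d:ℝ) - 1 := by
      have : (2:ℝ) ≤ d := by exact_mod_cast hd
      linarith
    have hdetsub : (ρ - ρᵀ).det = 0 := by
      have h2 : (ρ - ρᵀ)ᵀ = -(ρ - ρᵀ) := by
        rw [Matrix.transpose_sub, Matrix.transpose_transpose, neg_sub]
      have h3 := congrArg Matrix.det h2
      rw [Matrix.det_transpose, Matrix.det_neg, Fintype.card_fin, Odd.neg_one_pow hodd,
        neg_one_mul] at h3
      have h4 : (2:ℂ) * (ρ - ρᵀ).det = 0 := by linear_combination h3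
      simpa using h4
    have hdetK : K.det = 0 := by
      rw [hKdef, Matrix.det_smul, hdetsub, mul_zero]
    have hprod := hKherm.det_eq_prod_eigenvalues
    rw [hdetK] at hprod
    obtain ⟨k₀, -, hk₀⟩ := Finset.prod_eq_zero_iff.mp hprod.symm
    have hk₀' : lam k₀ = 0 := by
      have := hk₀
      simpa using this
    have hsmall' : ((d:ℝ) - 1) * (SD d ρ^2 + SX d ρ^2) ≤ 1 := by
      have h := (le_div_iff₀ hd1).mp hsmall
      linarith
    have hb' := hpb k₀ hk₀' hsmall'
    have hLsq : (Real.sqrt d * SI d ρ)^2 = (d:ℝ)^2 * ∑ k, lam k^2 := by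
      rw [mul_pow, Real.sq_sqrt hd0.le, hSIlam]
      ring
    have hRHS0 : 0 ≤ Real.sqrt ((d:ℝ)-1) + Real.sqrt (SD d ρ^2 + SX d ρ^2) := by positivity
    have hSI0 : 0 ≤ SI d ρ := by unfold SI; exact Real.sqrt_nonneg _
    have hLHS0 : 0 ≤ Real.sqrt d * SI d ρ := mul_nonneg (Real.sqrt_nonneg _) hSI0
    have hsqle : (Real.sqrt d * SI d ρ)^2
        ≤ (Real.sqrt ((d:ℝ)-1) + Real.sqrt (SD d ρ^2 + SX d ρ^2))^2 := by
      rw [hLsq, add_sq, Real.sq_sqrt hd1.le, Real.sq_sqrt ha0]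
      have hmul : Real.sqrt (((d:ℝ)-1) * (SD d ρ^2 + SX d ρ^2))
          = Real.sqrt ((d:ℝ)-1) * Real.sqrt (SD d ρ^2 + SX d ρ^2) := Real.sqrt_mul hd1.le _
      rw [hmul] at hb'
      linarith
    calc Real.sqrt d * SI d ρ = Real.sqrt ((Real.sqrt d * SI d ρ)^2) :=
          (Real.sqrt_sq hLHS0).symm
      _ ≤ Real.sqrt ((Real.sqrt ((d:ℝ)-1) + Real.sqrt (SD d ρ^2 + SX d ρ^2))^2) :=
          Real.sqrt_le_sqrt hsqle
      _ = Real.sqrt ((d:ℝ)-1) + Real.sqrt (SD d ρ^2 + SX d ρ^2) := Real.sqrt_sq hRHS0
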